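/- Let (K, D) be a j-field, F ⊆ K a jcl-closed subfield, and z ∈ D. Then: (a) if z ∈ F then j(z), j'(z), j''(z) ∈ F; (b) if any one of j(z), j'(z), j''(z) lies in F, then z ∈ F. (Proof via the Ax–Schanuel inequality: tr.deg._F F(z, j(z), j'(z), j''(z)) ≥ 3·dim_G(z|F) + dim^j(z|F), whose right-hand side is 0 or 4 when F is jcl-closed.) -/

import Mathlib

noncomputable section

open scoped Classical

/-- The group `GL₂(ℚ)`. -/
abbrev GL2Q := Matrix.GeneralLinearGroup (Fin 2) ℚ

variable {K : Type*} [Field K] [CharZero K]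

/-- Entry of a matrix in `GL₂(ℚ)`. -/
def mEntry (g : GL2Q) (i k : Fin 2) : ℚ := (g : Matrix (Fin 2) (Fin 2) ℚ) i k

/-- Numerator of the fractional linear action. -/
def moebNum (g : GL2Q) (x : K) : K := (mEntry g 0 0 : K) * x + (mEntry g 0 1 : K)

/-- Denominator of the fractional linear action. -/
def moebDen (g : GL2Q) (x : K) : K := (mEntry g 1 0 : K) * x + (mEntry g 1 1 : K)

/-- The fractional linear (Möbius) action `g·x = (ax+b)/(cx+d)`. -/
def moeb (g : GL2Q) (x : K) : K := moebNum g x / moebDen g x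

/-- `MoebRel g x y` holds if the action of `g` at `x` is defined (denominator nonzero)
and `g·x = y`. -/
def MoebRel (g : GL2Q) (x y : K) : Prop := moebDen g x ≠ 0 ∧ moeb g x = y

/-- The `G`-closure of a set `A ⊆ K`: all elements of the form `g·a`, `a ∈ A`, `g ∈ GL₂(ℚ)`. -/
def Gcl (A : Set K) : Set K := {x | ∃ a ∈ A, ∃ g : GL2Q, MoebRel g a x}

/-- A matrix is scalar if it is a rational multiple of the identity. -/
def IsScalarMat (g : GL2Q) : Prop :=
  ∃ r : ℚ, (g : Matrix (Fin 2) (Fin 2) ℚ) = r • (1 : Matrix (Fin 2) (Fin 2) ℚ)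

/-- `IsRed g m`: `m` is the reduced integral form of `g`, i.e. a positive rational
multiple of `g` with coprime integer entries. -/
def IsRed (g : GL2Q) (m : Matrix (Fin 2) (Fin 2) ℤ) : Prop :=
  (∃ r : ℚ, 0 < r ∧ ∀ i k, (m i k : ℚ) = r * mEntry g i k) ∧
    Int.gcd (Int.gcd (m 0 0) (m 0 1)) (Int.gcd (m 1 0) (m 1 1)) = 1

/-- `DetRed g N`: the determinant of the reduced form of `g` is `N`. -/
def DetRed (g : GL2Q) (N : ℤ) : Prop := ∃ m, IsRed g m ∧ m.det = N

/-- A `j`-field: a field of characteristic zero together with a domain `D` closed under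
the `GL₂(ℚ)`-action and functions `j, j', j'', j'''` satisfying the axioms of the
modular `j`-function (the differential equation, the modular-polynomial axioms and the
axiom on the singular values of `j`). -/
structure JField (K : Type*) [Field K] [CharZero K] where
  D : Set K
  j : K → K
  j' : K → K
  j'' : K → K
  j''' : K → K
  /-- The family of modular polynomials `Φ_N`. -/
  Φ : ℕ → MvPolynomial (Fin 2) ℤ
  D_closed : ∀ z ∈ D, ∀ g : GL2Q, moebDen g z ≠ 0 ∧ moeb g z ∈ D
  deq : ∀ z ∈ D, j z ≠ 0 → j z ≠ 1728 → j' z ≠ 0 →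
    j''' z / j' z - (3/2) * (j'' z / j' z)^2
      + ((j z)^2 - 1968 * j z + 2654208) / (2 * (j z)^2 * (j z - 1728)^2) * (j' z)^2 = 0
  mod_iff : ∀ z₁ ∈ D, ∀ z₂ ∈ D, ∀ N : ℕ, 0 < N →
    (MvPolynomial.aeval ![j z₁, j z₂] (Φ N) = 0 ↔
      ∃ g : GL2Q, DetRed g (N : ℤ) ∧ MoebRel g z₂ z₁)
  sing : ∀ z ∈ D, (j z = 0 ∨ j z = 1728 ∨ j' z = 0) →
    ∃ g : GL2Q, ¬ IsScalarMat g ∧ MoebRel g z z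

namespace JField

variable (F : JField K)

/-- A point of the domain is special if `Φ_N(j(z), j(z)) = 0` for some `N > 1`. -/
def Special (z : K) : Prop :=
  ∃ N : ℕ, 1 < N ∧ MvPolynomial.aeval ![F.j z, F.j z] (F.Φ N) = 0

/-- `J(S) = j(S) ∪ j'(S) ∪ j''(S)`. -/
def JImage (S : Set K) : Set K := F.j '' S ∪ F.j' '' S ∪ F.j'' '' S

/-- A `j`-derivation: a derivation `der` with `der(j⁽ᵗ⁾(z)) = j⁽ᵗ⁺¹⁾(z)·derz` for `z ∈ D`. -/
def IsJDer (der : Derivation ℚ K K) : Prop :=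
  ∀ z ∈ F.D, der (F.j z) = F.j' z * der z ∧ der (F.j' z) = F.j'' z * der z ∧
    der (F.j'' z) = F.j''' z * der z

/-- The `j`-closure of `X`: the intersection of the kernels of all `j`-derivations
vanishing on `X`. -/
def jcl (X : Set K) : Set K :=
  {a | ∀ der : Derivation ℚ K K, F.IsJDer der → (∀ x ∈ X, der x = 0) → der a = 0}

/-- The `j`-closure of a set, as a subfield. -/
def jclSubfield (X : Set K) : Subfield K where
  carrier := F.jcl X
  zero_mem' := fun der _ _ => by simp
  one_mem' := fun der _ _ => by simp
  add_mem' := fun ha hb der hj hX => by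
    rw [map_add, ha der hj hX, hb der hj hX, add_zero]
  mul_mem' := fun {a b} ha hb der hj hX => by
    rw [Derivation.leibniz, ha der hj hX, hb der hj hX]; simp
  neg_mem' := fun {a} ha der hj hX => by rw [map_neg, ha der hj hX, neg_zero]
  inv_mem' := fun a ha der hj hX => by
    rw [Derivation.leibniz_inv, ha der hj hX]; simp

end JField

/-- The transcendence degree of the field generated by `A` over the subfield `Fb`:
the least size of a finite subset `S ⊆ A` such that every element of `A` is algebraic
over `Fb(S)` (`⊤` if there is no such set). -/
def trdegNat (Fb : Subfield K) (A : Set K) : ℕ∞ :=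
  sInf {n : ℕ∞ | ∃ S : Finset K, ↑S ⊆ A ∧ (S.card : ℕ∞) = n ∧
    ∀ a ∈ A, IsAlgebraic (Subfield.closure ((Fb : Set K) ∪ ↑S)) a}

/-- The dimension of `A` over `B` in the pregeometry `Gcl`: the least size of a finite
subset `S ⊆ A` with `A ⊆ Gcl(S ∪ B)`. -/
def Gdim (A B : Set K) : ℕ∞ :=
  sInf {n : ℕ∞ | ∃ S : Finset K, ↑S ⊆ A ∧ (S.card : ℕ∞) = n ∧ A ⊆ Gcl (↑S ∪ B)}

namespace JField

variable (F : JField K)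

/-- The dimension of `A` over `B` in the pregeometry `jcl`. -/
def jdim (A B : Set K) : ℕ∞ :=
  sInf {n : ℕ∞ | ∃ S : Finset K, ↑S ⊆ A ∧ (S.card : ℕ∞) = n ∧ A ⊆ F.jcl (↑S ∪ B)}

end JField

/-- A `j`-subfield of a `j`-field `(K, D)`: a subfield `A` together with a subset
`D_A ⊆ D ∩ A` closed under the `GL₂(ℚ)`-action, such that `A` is closed under
`j, j', j'', j'''` on `D_A`. -/
structure JSubfield (F : JField K) where
  carrier : Subfield K
  dom : Set K
  dom_subset : dom ⊆ F.D
  dom_mem : ∀ z ∈ dom, z ∈ carrier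
  dom_closed : ∀ z ∈ dom, ∀ g : GL2Q, moeb g z ∈ dom
  jmem : ∀ z ∈ dom, F.j z ∈ carrier ∧ F.j' z ∈ carrier ∧ F.j'' z ∈ carrier ∧
    F.j''' z ∈ carrier

namespace JSubfield

variable {F : JField K}

/-- Inclusion of `j`-subfields. -/
def le (A B : JSubfield F) : Prop := A.carrier ≤ B.carrier ∧ A.dom ⊆ B.dom

/-- Union (compositum) of two `j`-subfields. -/
def union (A B : JSubfield F) : JSubfield F where
  carrier := A.carrier ⊔ B.carrier
  dom := A.dom ∪ B.dom
  dom_subset := Set.union_subset A.dom_subset B.dom_subset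
  dom_mem := by
    rintro z (hz | hz)
    · exact SetLike.le_def.mp le_sup_left (A.dom_mem z hz)
    · exact SetLike.le_def.mp le_sup_right (B.dom_mem z hz)
  dom_closed := by
    rintro z (hz | hz) g
    · exact Or.inl (A.dom_closed z hz g)
    · exact Or.inr (B.dom_closed z hz g)
  jmem := by
    rintro z (hz | hz)
    · obtain ⟨h1, h2, h3, h4⟩ := A.jmem z hz
      exact ⟨SetLike.le_def.mp le_sup_left h1, SetLike.le_def.mp le_sup_left h2,
        SetLike.le_def.mp le_sup_left h3, SetLike.le_def.mp le_sup_left h4⟩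
    · obtain ⟨h1, h2, h3, h4⟩ := B.jmem z hz
      exact ⟨SetLike.le_def.mp le_sup_right h1, SetLike.le_def.mp le_sup_right h2,
        SetLike.le_def.mp le_sup_right h3, SetLike.le_def.mp le_sup_right h4⟩

/-- Intersection of two `j`-subfields. -/
def inter (A B : JSubfield F) : JSubfield F where
  carrier := A.carrier ⊓ B.carrier
  dom := A.dom ∩ B.dom
  dom_subset := fun z hz => A.dom_subset hz.1
  dom_mem := fun z hz => ⟨A.dom_mem z hz.1, B.dom_mem z hz.2⟩
  dom_closed := fun z hz g => ⟨A.dom_closed z hz.1 g, B.dom_closed z hz.2 g⟩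
  jmem := fun z hz => by
    obtain ⟨a1, a2, a3, a4⟩ := A.jmem z hz.1
    obtain ⟨b1, b2, b3, b4⟩ := B.jmem z hz.2
    exact ⟨⟨a1, b1⟩, ⟨a2, b2⟩, ⟨a3, b3⟩, ⟨a4, b4⟩⟩

end JSubfield

namespace JField

variable (F : JField K)

/-- `A` is a `j`-subfield finitely generated over `Cs`: `A` is the smallest
`j`-subfield containing `Cs` and some finite set `X`. -/
def FinGenOver (Cs A : JSubfield F) : Prop :=
  Cs.le A ∧ ∃ X : Finset K, ↑X ⊆ (A.carrier : Set K) ∧ (↑X ∩ F.D ⊆ A.dom) ∧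
    ∀ B : JSubfield F, Cs.le B → ↑X ⊆ (B.carrier : Set K) → (↑X ∩ F.D ⊆ B.dom) → A.le B

/-- The predimension `δ_j(A | Cs) = tr.deg._Cs A − 3·dim_G(D_A | D_Cs)`. -/
def delta (Cs A : JSubfield F) : ℤ :=
  ((trdegNat Cs.carrier (A.carrier : Set K)).toNat : ℤ)
    - 3 * ((Gdim A.dom Cs.dom).toNat : ℤ)

/-- The predimension of a finite tuple `z` over a `j`-subfield `A`:
`tr.deg._A A(z, J(z)) − 3·dim_G(z | D_A)`. -/
def deltaTuple (A : JSubfield F) (z : Finset K) : ℤ :=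
  ((trdegNat A.carrier ((↑z : Set K) ∪ F.JImage ↑z)).toNat : ℤ)
    - 3 * ((Gdim (↑z : Set K) A.dom).toNat : ℤ)

/-- Self-sufficiency of an extension of `j`-subfields: `A ⊴ B` iff `A ≤ B` and
`δ_j(z | A) ≥ 0` for all finite tuples `z` from `D_B`. -/
def SelfSuff (A B : JSubfield F) : Prop :=
  A.le B ∧ ∀ z : Finset K, (↑z : Set K) ⊆ B.dom → 0 ≤ F.deltaTuple A z

/-- Self-sufficiency of a `j`-subfield in the ambient `j`-field `(K, D)`. -/
def SelfSuffAmb (A : JSubfield F) : Prop :=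
  ∀ z : Finset K, (↑z : Set K) ⊆ F.D → 0 ≤ F.deltaTuple A z

/-- The ambient `j`-field is graph-generated by `J`. -/
def GraphGenAmb : Prop := Subfield.closure (F.D ∪ F.JImage F.D) = ⊤

/-- A `j`-subfield is graph-generated by `J`. -/
def GraphGen (A : JSubfield F) : Prop :=
  A.carrier = Subfield.closure (A.dom ∪ F.JImage A.dom)

/-- Evaluation map for `j`-polynomials: the variable `(i, 0)` is sent to `aᵢ`, and
`(i, 1), (i, 2), (i, 3)` to `j(aᵢ), j'(aᵢ), j''(aᵢ)`. -/
def jVal {n : ℕ} (a : Fin n → K) : Fin n × Fin 4 → K :=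
  fun p => ![a p.1, F.j (a p.1), F.j' (a p.1), F.j'' (a p.1)] p.2

/-- The formal partial derivative `derf/derXᵢ` of a `j`-polynomial, evaluated at `a`,
where `j, j', j''` are differentiated by the chain rule. -/
def jpderivEval {n : ℕ} (i : Fin n) (f : MvPolynomial (Fin n × Fin 4) K)
    (a : Fin n → K) : K :=
  MvPolynomial.eval (F.jVal a) (MvPolynomial.pderiv (i, (0 : Fin 4)) f)
  + F.j' (a i) * MvPolynomial.eval (F.jVal a) (MvPolynomial.pderiv (i, (1 : Fin 4)) f)
  + F.j'' (a i) * MvPolynomial.eval (F.jVal a) (MvPolynomial.pderiv (i, (2 : Fin 4)) f)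
  + F.j''' (a i) * MvPolynomial.eval (F.jVal a) (MvPolynomial.pderiv (i, (3 : Fin 4)) f)

/-- `a` is a solution of the Khovanskii system of `j`-polynomials `f` over `B`:
the `fᵢ` have coefficients in the subring generated by `B`, vanish at `a`, and the
Jacobian determinant of formal `j`-polynomial partial derivatives does not vanish at `a`. -/
def IsKhovanskiiSol (B : Set K) {n : ℕ}
    (f : Fin n → MvPolynomial (Fin n × Fin 4) K) (a : Fin n → K) : Prop :=
  (∀ i m, (f i).coeff m ∈ Subring.closure B) ∧
  (∀ i, MvPolynomial.eval (F.jVal a) (f i) = 0) ∧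
  (Matrix.of fun i k => F.jpderivEval k (f i) a).det ≠ 0

/-- The Khovanskii closure `kcl(B)`: elements which are the first coordinate of a
non-singular solution of a Khovanskii system of `j`-polynomials over `B`. -/
def kcl (B : Set K) : Set K :=
  {a | ∃ (n : ℕ) (f : Fin (n+1) → MvPolynomial (Fin (n+1) × Fin 4) K)
    (x : Fin (n+1) → K), x 0 = a ∧ F.IsKhovanskiiSol B f x}

end JField

/-- `z` is a `Gcl`-basis of `Ddom` over `B`: the coordinates of `z` lie in `Ddom`,
span `Ddom` over `B`, and are `Gcl`-independent over `B`. -/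
def IsGclBasis {n : ℕ} (z : Fin n → K) (Ddom B : Set K) : Prop :=
  (∀ i, z i ∈ Ddom) ∧ Ddom ⊆ Gcl (Set.range z ∪ B) ∧
  ∀ i, z i ∉ Gcl ((Set.range z \ {z i}) ∪ B)


namespace JField

variable (F : JField K)

/-- The predimension of a finite set `X` over `(C, D_C)` with `C = jcl(∅)`:
`δ_j(X) = tr.deg._C C(X, J(dom)) − 3·dim_G(X ∩ D | D_C)`, where `dom = Gcl((X ∩ D) ∪ D_C)`
is the domain of the `j`-subfield generated by `X` over `(C, D_C)`. -/
def deltaFinset (X : Finset K) : ℤ :=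
  ((trdegNat (F.jclSubfield ∅)
      ((↑X : Set K) ∪ F.JImage (Gcl (((↑X : Set K) ∩ F.D) ∪ (F.jcl ∅ ∩ F.D))))).toNat : ℤ)
    - 3 * ((Gdim ((↑X : Set K) ∩ F.D) (F.jcl ∅ ∩ F.D)).toNat : ℤ)

end JField

end
set_option maxHeartbeats 2000000 in
theorem jclClosed_mem_iff {K : Type*} [Field K] [CharZero K] (F : JField K)
    (Fs : Subfield K) (hFs : (Fs : Set K) = F.jcl ↑Fs) (z : K) (hz : z ∈ F.D) :
    (z ∈ Fs → F.j z ∈ Fs ∧ F.j' z ∈ Fs ∧ F.j'' z ∈ Fs) ∧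
    ((F.j z ∈ Fs ∨ F.j' z ∈ Fs ∨ F.j'' z ∈ Fs) → z ∈ Fs) := by
  have key : ∀ a : K,
      (∀ der : Derivation ℚ K K, F.IsJDer der → (∀ x ∈ (Fs : Set K), der x = 0) → der a = 0) →
      a ∈ Fs := by
    intro a h
    rw [← SetLike.mem_coe, hFs]
    exact h
  constructor
  · intro hzF
    refine ⟨key _ ?_, key _ ?_, key _ ?_⟩ <;>
    · intro der hder hvan
      obtain ⟨h1, h2, h3⟩ := hder z hz
      first
        | (rw [h1, hvan z hzF, mul_zero])
        | (rw [h2, hvan z hzF, mul_zero])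
        | (rw [h3, hvan z hzF, mul_zero])
  · intro hcase
    refine key z ?_
    intro der hder hvan
    by_contra ht
    have dc : ∀ q : ℚ, der (q : K) = 0 := fun q => by
      rw [← eq_ratCast (algebraMap ℚ K) q]; exact der.map_algebraMap q
    have dnat : ∀ m : ℕ, der (m : K) = 0 := fun m => by
      rw [show ((m : K)) = (((m : ℚ)) : K) by push_cast; ring]; exact dc _
    have dn : ∀ (n : ℕ) [n.AtLeastTwo], der (OfNat.ofNat n : K) = 0 := by
      intro n _
      rw [← Nat.cast_ofNat (R := K)]
      exact dnat _
    set t := der z with htdef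
    obtain ⟨hdx, hdy, hdu⟩ := hder z hz
    set x := F.j z with hxdef
    set y := F.j' z with hydef
    set u := F.j'' z with hudef
    set w := F.j''' z with hwdef
    -- If z is fixed by a nonscalar matrix, contradiction
    have fixcontra : (x = 0 ∨ x = 1728 ∨ y = 0) → False := by
      intro hsing
      obtain ⟨g, hns, hden, heq⟩ := F.sing z hz hsing
      have hden' : (mEntry g 1 0 : K) * z + (mEntry g 1 1 : K) ≠ 0 := hden
      have heq' : ((mEntry g 0 0 : K) * z + (mEntry g 0 1 : K))
          / ((mEntry g 1 0 : K) * z + (mEntry g 1 1 : K)) = z := heq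
      rw [div_eq_iff hden'] at heq'
      have h6 : t * ((mEntry g 0 0 : K) - (mEntry g 1 1 : K)
          - 2 * (mEntry g 1 0 : K) * z) = 0 := by
        have h5 := congrArg der heq'
        simp only [map_add, Derivation.leibniz, dc, smul_eq_mul, mul_zero, zero_mul,
          add_zero, zero_add, ← htdef] at h5
        linear_combination h5
      have h7 : (mEntry g 0 0 : K) - (mEntry g 1 1 : K) - 2 * (mEntry g 1 0 : K) * z = 0 :=
        (mul_eq_zero.mp h6).resolve_left ht
      by_cases hC0 : mEntry g 1 0 = 0
      · -- g is scalar: contradiction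
        have hADq : mEntry g 0 0 = mEntry g 1 1 := by
          have hAD : (mEntry g 0 0 : K) = (mEntry g 1 1 : K) := by
            have h8 := h7
            rw [hC0] at h8
            push_cast at h8
            linear_combination h8
          exact_mod_cast hAD
        have hBq : mEntry g 0 1 = 0 := by
          have hBK : (mEntry g 0 1 : K) = 0 := by
            rw [hC0, hADq] at heq'
            push_cast at heq'
            linear_combination heq'
          exact_mod_cast hBK
        refine hns ⟨mEntry g 0 0, ?_⟩
        ext i k
        fin_cases i <;> fin_cases k <;>
          simp [Matrix.smul_apply, Matrix.one_apply] <;>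
          first
            | rfl
            | (exact hBq)
            | (exact hC0)
            | (exact hADq.symm)
      · -- z is rational
        have h2C : ((mEntry g 1 0 : ℚ) : K) ≠ 0 := by exact_mod_cast hC0
        have h2C2 : (2 : K) * (mEntry g 1 0 : K) ≠ 0 := mul_ne_zero two_ne_zero h2C
        have hzrat : z = (((mEntry g 0 0 - mEntry g 1 1) / (2 * mEntry g 1 0) : ℚ) : K) := by
          push_cast
          rw [eq_div_iff h2C2]
          linear_combination -h7
        exact ht (by rw [htdef, hzrat]; exact dc _)
    by_cases hx0 : x = 0
    · exact fixcontra (Or.inl hx0)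
    by_cases hx1728 : x = 1728
    · exact fixcontra (Or.inr (Or.inl hx1728))
    by_cases hy0 : y = 0
    · exact fixcontra (Or.inr (Or.inr hy0))
    have hdeq := F.deq z hz hx0 hx1728 hy0
    rw [← hxdef, ← hydef, ← hudef, ← hwdef] at hdeq
    have hx1728Q : x - 1728 ≠ 0 := sub_ne_zero.mpr hx1728
    have hR : 2 * w * y * (x ^ 2 * (x - 1728) ^ 2) - 3 * u ^ 2 * (x ^ 2 * (x - 1728) ^ 2)
        + (x ^ 2 - 1968 * x + 2654208) * y ^ 4 = 0 := by
      have hR' : (2 * y) * (2 * w * y * (x ^ 2 * (x - 1728) ^ 2)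
          - 3 * u ^ 2 * (x ^ 2 * (x - 1728) ^ 2)
          + (x ^ 2 - 1968 * x + 2654208) * y ^ 4) = 0 := by
        field_simp at hdeq
        linear_combination (2 * y) * hdeq
      exact (mul_eq_zero.mp hR').resolve_left (mul_ne_zero two_ne_zero hy0)
    -- the case u = 0 (and w = 0) is impossible
    have contraN : u = 0 → w = 0 → False := by
      intro hu0 hw0
      have hN : (x ^ 2 - 1968 * x + 2654208) * y ^ 4 = 0 := by
        linear_combination hR - 2 * y * (x ^ 2 * (x - 1728) ^ 2) * hw0
          + 3 * (u + 0) * (x ^ 2 * (x - 1728) ^ 2) * hu0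
      have hN0 : x ^ 2 - 1968 * x + 2654208 = 0 :=
        (mul_eq_zero.mp hN).resolve_right (pow_ne_zero 4 hy0)
      have hdN : der (x ^ 2 - 1968 * x + 2654208) = 0 := by rw [hN0]; simp
      have hdN2 : der (x ^ 2 - 1968 * x + 2654208) = (2 * x - 1968) * (y * t) := by
        simp only [map_add, map_sub, map_neg, Derivation.leibniz, Derivation.leibniz_pow,
          hdx, dn, Derivation.map_one_eq_zero, smul_eq_mul, nsmul_eq_mul]
        push_cast
        ring
      have h2x : 2 * x - 1968 = 0 := by
        rcases mul_eq_zero.mp (hdN2.symm.trans hdN) with h | h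
        · exact h
        · rcases mul_eq_zero.mp h with hh | hh
          · exact absurd hh hy0
          · exact absurd hh ht
      have hx984 : x = 984 := by linear_combination h2x / 2
      rw [hx984] at hN0
      norm_num at hN0
    rcases hcase with hc | hc | hc
    · -- j z ∈ Fs
      have hyt : y * t = 0 := by rw [← hdx]; exact hvan _ hc
      rcases mul_eq_zero.mp hyt with h | h
      · exact hy0 h
      · exact ht h
    · -- j' z ∈ Fs
      have hut : u * t = 0 := by rw [← hdy]; exact hvan _ hc
      have hu0 : u = 0 := (mul_eq_zero.mp hut).resolve_right ht
      have hw0 : w = 0 := by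
        have hwt : w * t = 0 := by
          rw [← hdu, hudef, show F.j'' z = 0 from hu0]; simp
        exact (mul_eq_zero.mp hwt).resolve_right ht
      exact contraN hu0 hw0
    · -- j'' z ∈ Fs
      have hwt : w * t = 0 := by rw [← hdu]; exact hvan _ hc
      have hw0 : w = 0 := (mul_eq_zero.mp hwt).resolve_right ht
      by_cases hu0 : u = 0
      · exact contraN hu0 hw0
      have hdu0 : der u = 0 := by rw [hdu, hw0, zero_mul]
      have he0 : (3 : K) * x ^ 4 * u ^ 2 + (-10368 : K) * x ^ 3 * u ^ 2 + (-1 : K) * x ^ 2 * y ^ 4 + (8957952 : K) * x ^ 2 * u ^ 2 + (1968 : K) * x * y ^ 4 + (-2654208 : K) * y ^ 4 = 0 := by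
        linear_combination -hR + 2 * y * (x ^ 2 * (x - 1728) ^ 2) * hw0
      have hd0 : der ((3 : K) * x ^ 4 * u ^ 2 + (-10368 : K) * x ^ 3 * u ^ 2 + (-1 : K) * x ^ 2 * y ^ 4 + (8957952 : K) * x ^ 2 * u ^ 2 + (1968 : K) * x * y ^ 4 + (-2654208 : K) * y ^ 4) = t * ((12 : K) * x ^ 3 * y * u ^ 2 + (-4 : K) * x ^ 2 * y ^ 3 * u + (-31104 : K) * x ^ 2 * y * u ^ 2 + (-2 : K) * x * y ^ 5 + (7872 : K) * x * y ^ 3 * u + (17915904 : K) * x * y * u ^ 2 + (1968 : K) * y ^ 5 + (-10616832 : K) * y ^ 3 * u) := by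
        simp only [map_add, map_sub, map_neg, Derivation.leibniz, Derivation.leibniz_pow,
          hdx, hdy, hdu0, dn, Derivation.map_one_eq_zero, smul_eq_mul, nsmul_eq_mul]
        push_cast
        ring
      have hq0 : der ((3 : K) * x ^ 4 * u ^ 2 + (-10368 : K) * x ^ 3 * u ^ 2 + (-1 : K) * x ^ 2 * y ^ 4 + (8957952 : K) * x ^ 2 * u ^ 2 + (1968 : K) * x * y ^ 4 + (-2654208 : K) * y ^ 4) = 0 := by rw [he0]; simp
      have he1 : ((12 : K) * x ^ 3 * y * u ^ 2 + (-4 : K) * x ^ 2 * y ^ 3 * u + (-31104 : K) * x ^ 2 * y * u ^ 2 + (-2 : K) * x * y ^ 5 + (7872 : K) * x * y ^ 3 * u + (17915904 : K) * x * y * u ^ 2 + (1968 : K) * y ^ 5 + (-10616832 : K) * y ^ 3 * u) = 0 :=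
        (mul_eq_zero.mp (hd0.symm.trans hq0)).resolve_left ht
      have hd1 : der ((12 : K) * x ^ 3 * y * u ^ 2 + (-4 : K) * x ^ 2 * y ^ 3 * u + (-31104 : K) * x ^ 2 * y * u ^ 2 + (-2 : K) * x * y ^ 5 + (7872 : K) * x * y ^ 3 * u + (17915904 : K) * x * y * u ^ 2 + (1968 : K) * y ^ 5 + (-10616832 : K) * y ^ 3 * u) = t * ((12 : K) * x ^ 3 * u ^ 3 + (24 : K) * x ^ 2 * y ^ 2 * u ^ 2 + (-31104 : K) * x ^ 2 * u ^ 3 + (-18 : K) * x * y ^ 4 * u + (-38592 : K) * x * y ^ 2 * u ^ 2 + (17915904 : K) * x * u ^ 3 + (-2 : K) * y ^ 6 + (17712 : K) * y ^ 4 * u + (-13934592 : K) * y ^ 2 * u ^ 2) := by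
        simp only [map_add, map_sub, map_neg, Derivation.leibniz, Derivation.leibniz_pow,
          hdx, hdy, hdu0, dn, Derivation.map_one_eq_zero, smul_eq_mul, nsmul_eq_mul]
        push_cast
        ring
      have hq1 : der ((12 : K) * x ^ 3 * y * u ^ 2 + (-4 : K) * x ^ 2 * y ^ 3 * u + (-31104 : K) * x ^ 2 * y * u ^ 2 + (-2 : K) * x * y ^ 5 + (7872 : K) * x * y ^ 3 * u + (17915904 : K) * x * y * u ^ 2 + (1968 : K) * y ^ 5 + (-10616832 : K) * y ^ 3 * u) = 0 := by rw [he1]; simp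
      have he2 : ((12 : K) * x ^ 3 * u ^ 3 + (24 : K) * x ^ 2 * y ^ 2 * u ^ 2 + (-31104 : K) * x ^ 2 * u ^ 3 + (-18 : K) * x * y ^ 4 * u + (-38592 : K) * x * y ^ 2 * u ^ 2 + (17915904 : K) * x * u ^ 3 + (-2 : K) * y ^ 6 + (17712 : K) * y ^ 4 * u + (-13934592 : K) * y ^ 2 * u ^ 2) = 0 :=
        (mul_eq_zero.mp (hd1.symm.trans hq1)).resolve_left ht
      have hd2 : der ((12 : K) * x ^ 3 * u ^ 3 + (24 : K) * x ^ 2 * y ^ 2 * u ^ 2 + (-31104 : K) * x ^ 2 * u ^ 3 + (-18 : K) * x * y ^ 4 * u + (-38592 : K) * x * y ^ 2 * u ^ 2 + (17915904 : K) * x * u ^ 3 + (-2 : K) * y ^ 6 + (17712 : K) * y ^ 4 * u + (-13934592 : K) * y ^ 2 * u ^ 2) = t * ((84 : K) * x ^ 2 * y * u ^ 3 + (-24 : K) * x * y ^ 3 * u ^ 2 + (-139392 : K) * x * y * u ^ 3 + (-30 : K) * y ^ 5 * u + (32256 : K) * y ^ 3 * u ^ 2 + (-9953280 : K) * y * u ^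 3) := by
        simp only [map_add, map_sub, map_neg, Derivation.leibniz, Derivation.leibniz_pow,
          hdx, hdy, hdu0, dn, Derivation.map_one_eq_zero, smul_eq_mul, nsmul_eq_mul]
        push_cast
        ring
      have hq2 : der ((12 : K) * x ^ 3 * u ^ 3 + (24 : K) * x ^ 2 * y ^ 2 * u ^ 2 + (-31104 : K) * x ^ 2 * u ^ 3 + (-18 : K) * x * y ^ 4 * u + (-38592 : K) * x * y ^ 2 * u ^ 2 + (17915904 : K) * x * u ^ 3 + (-2 : K) * y ^ 6 + (17712 : K) * y ^ 4 * u + (-13934592 : K) * y ^ 2 * u ^ 2) = 0 := by rw [he2]; simp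
      have he3 : ((84 : K) * x ^ 2 * y * u ^ 3 + (-24 : K) * x * y ^ 3 * u ^ 2 + (-139392 : K) * x * y * u ^ 3 + (-30 : K) * y ^ 5 * u + (32256 : K) * y ^ 3 * u ^ 2 + (-9953280 : K) * y * u ^ 3) = 0 :=
        (mul_eq_zero.mp (hd2.symm.trans hq2)).resolve_left ht
      have hd3 : der ((84 : K) * x ^ 2 * y * u ^ 3 + (-24 : K) * x * y ^ 3 * u ^ 2 + (-139392 : K) * x * y * u ^ 3 + (-30 : K) * y ^ 5 * u + (32256 : K) * y ^ 3 * u ^ 2 + (-9953280 : K) * y * u ^ 3) = t * ((84 : K) * x ^ 2 * u ^ 4 + (96 : K) * x * y ^ 2 * u ^ 3 + (-139392 : K) * x * u ^ 4 + (-174 : K) * y ^ 4 * u ^ 2 + (-42624 : K) * y ^ 2 * u ^ 3 + (-9953280 : K) * u ^ 4) := by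
        simp only [map_add, map_sub, map_neg, Derivation.leibniz, Derivation.leibniz_pow,
          hdx, hdy, hdu0, dn, Derivation.map_one_eq_zero, smul_eq_mul, nsmul_eq_mul]
        push_cast
        ring
      have hq3 : der ((84 : K) * x ^ 2 * y * u ^ 3 + (-24 : K) * x * y ^ 3 * u ^ 2 + (-139392 : K) * x * y * u ^ 3 + (-30 : K) * y ^ 5 * u + (32256 : K) * y ^ 3 * u ^ 2 + (-9953280 : K) * y * u ^ 3) = 0 := by rw [he3]; simp
      have he4 : ((84 : K) * x ^ 2 * u ^ 4 + (96 : K) * x * y ^ 2 * u ^ 3 + (-139392 : K) * x * u ^ 4 + (-174 : K) * y ^ 4 * u ^ 2 + (-42624 : K) * y ^ 2 * u ^ 3 + (-9953280 : K) * u ^ 4) = 0 :=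
        (mul_eq_zero.mp (hd3.symm.trans hq3)).resolve_left ht
      have hd4 : der ((84 : K) * x ^ 2 * u ^ 4 + (96 : K) * x * y ^ 2 * u ^ 3 + (-139392 : K) * x * u ^ 4 + (-174 : K) * y ^ 4 * u ^ 2 + (-42624 : K) * y ^ 2 * u ^ 3 + (-9953280 : K) * u ^ 4) = t * ((360 : K) * x * y * u ^ 4 + (-600 : K) * y ^ 3 * u ^ 3 + (-224640 : K) * y * u ^ 4) := by
        simp only [map_add, map_sub, map_neg, Derivation.leibniz, Derivation.leibniz_pow,
          hdx, hdy, hdu0, dn, Derivation.map_one_eq_zero, smul_eq_mul, nsmul_eq_mul]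
        push_cast
        ring
      have hq4 : der ((84 : K) * x ^ 2 * u ^ 4 + (96 : K) * x * y ^ 2 * u ^ 3 + (-139392 : K) * x * u ^ 4 + (-174 : K) * y ^ 4 * u ^ 2 + (-42624 : K) * y ^ 2 * u ^ 3 + (-9953280 : K) * u ^ 4) = 0 := by rw [he4]; simp
      have he5 : ((360 : K) * x * y * u ^ 4 + (-600 : K) * y ^ 3 * u ^ 3 + (-224640 : K) * y * u ^ 4) = 0 :=
        (mul_eq_zero.mp (hd4.symm.trans hq4)).resolve_left ht
      have hd5 : der ((360 : K) * x * y * u ^ 4 + (-600 : K) * y ^ 3 * u ^ 3 + (-224640 : K) * y * u ^ 4) = t * ((360 : K) * x * u ^ 5 + (-1440 : K) * y ^ 2 * u ^ 4 + (-224640 : K) * u ^ 5) := by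
        simp only [map_add, map_sub, map_neg, Derivation.leibniz, Derivation.leibniz_pow,
          hdx, hdy, hdu0, dn, Derivation.map_one_eq_zero, smul_eq_mul, nsmul_eq_mul]
        push_cast
        ring
      have hq5 : der ((360 : K) * x * y * u ^ 4 + (-600 : K) * y ^ 3 * u ^ 3 + (-224640 : K) * y * u ^ 4) = 0 := by rw [he5]; simp
      have he6 : ((360 : K) * x * u ^ 5 + (-1440 : K) * y ^ 2 * u ^ 4 + (-224640 : K) * u ^ 5) = 0 :=
        (mul_eq_zero.mp (hd5.symm.trans hq5)).resolve_left ht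
      have hd6 : der ((360 : K) * x * u ^ 5 + (-1440 : K) * y ^ 2 * u ^ 4 + (-224640 : K) * u ^ 5) = t * ((-2520 : K) * y * u ^ 5) := by
        simp only [map_add, map_sub, map_neg, Derivation.leibniz, Derivation.leibniz_pow,
          hdx, hdy, hdu0, dn, Derivation.map_one_eq_zero, smul_eq_mul, nsmul_eq_mul]
        push_cast
        ring
      have hq6 : der ((360 : K) * x * u ^ 5 + (-1440 : K) * y ^ 2 * u ^ 4 + (-224640 : K) * u ^ 5) = 0 := by rw [he6]; simp
      have he7 : ((-2520 : K) * y * u ^ 5) = 0 :=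
        (mul_eq_zero.mp (hd6.symm.trans hq6)).resolve_left ht
      have hyu : y * u ^ 5 = 0 := by linear_combination (-(1 : K) / 2520) * he7
      rcases mul_eq_zero.mp hyu with h | h
      · exact hy0 h
      · exact hu0 (pow_eq_zero_iff (by norm_num : (5 : ℕ) ≠ 0) |>.mp h)
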